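/- Assume ρ(AᵀA) ≤ 1, x̂ ∈ ℝⁿ with x̂ ≥ 0, ẑ ∈ ℝᵐ, K ≥ ‖f(x̂,ẑ)‖_∞, and (x̄,z̄) is a saddle point of L^K with Ax̄ = b and x̄ ≥ 0. Let x ∈ ℝⁿ, z ∈ ℝᵐ, set p = σ(x,z), p̂ = σ(x̂,ẑ), e_x = x − x̂, e_z = z − ẑ, and assume: (a) p̂ ⊆ p; (b) for each i ∈ p̂, (e_x)_i² ≤ μ_i f_i(x̂,ẑ)² with 0 < μ_i ≤ 1/160, and (e_x)_i = 0 for i ∉ p̂; (c) for each ℓ ∈ {1,…,m}, (e_z)_ℓ² ≤ μ_{n+ℓ}(a_ℓᵀx̂ − b_ℓ)² with 0 < μ_{n+ℓ} ≤ 1/160; (d) f(x,z)ᵀ I_{p∖p̂} f(x,z) ≤ (1/120)·( f(x̂,ẑ)ᵀ I_{p̂} f(x̂,ẑ) + (Ax̂ − b)ᵀ(Ax̂ − b) ). Then (x − x̄)ᵀ I_{p̂} f(x̂,ẑ) + (z − z̄)ᵀ(Ax̂ − b) − f(x,z)ᵀ I_p (AᵀA + I) I_{p̂} f(x̂,ẑ)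 − f(x,z)ᵀ I_p Aᵀ(Ax̂ − b) + (Ax − b)ᵀ A I_{p̂} f(x̂,ẑ) ≤ −⅛ f(x̂,ẑ)ᵀ I_{p̂} f(x̂,ẑ). -/

import Mathlib

open Matrix BigOperators

noncomputable def LK {n m : ℕ} (A : Matrix (Fin m) (Fin n) ℝ) (b : Fin m → ℝ)
    (c : Fin n → ℝ) (K : ℝ) (x : Fin n → ℝ) (z : Fin m → ℝ) : ℝ :=
  c ⬝ᵥ x + (1 / 2) * (x ⬝ᵥ x)
    + (1 / 2) * ((A *ᵥ x - b) ⬝ᵥ (A *ᵥ x - b))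
    + z ⬝ᵥ (A *ᵥ x - b)
    + K * ∑ i, max 0 (-(x i))

noncomputable def fmap {n m : ℕ} (A : Matrix (Fin m) (Fin n) ℝ) (b : Fin m → ℝ)
    (c : Fin n → ℝ) (x : Fin n → ℝ) (z : Fin m → ℝ) : Fin n → ℝ :=
  -(Aᵀ *ᵥ z + c + x) - Aᵀ *ᵥ (A *ᵥ x - b)

def sgm {n m : ℕ} (A : Matrix (Fin m) (Fin n) ℝ) (b : Fin m → ℝ)
    (c : Fin n → ℝ) (x : Fin n → ℝ) (z : Fin m → ℝ) : Set (Fin n) :=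
  {i | 0 ≤ fmap A b c x z i ∨ 0 < x i}

open Classical in
noncomputable def ISet {ι : Type*} [Fintype ι] [DecidableEq ι] (S : Set ι) : Matrix ι ι ℝ :=
  Matrix.diagonal fun i => if i ∈ S then 1 else 0

def IsSaddle {n m : ℕ} (A : Matrix (Fin m) (Fin n) ℝ) (b : Fin m → ℝ)
    (c : Fin n → ℝ) (K : ℝ) (xb : Fin n → ℝ) (zb : Fin m → ℝ) : Prop :=
  ∀ x z, LK A b c K xb z ≤ LK A b c K xb zb ∧ LK A b c K xb zb ≤ LK A b c K x zb

/- ### Auxiliary lemmas -/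

lemma dot_sq_nonneg' {k : ℕ} (v : Fin k → ℝ) : 0 ≤ v ⬝ᵥ v :=
  Finset.sum_nonneg fun _ _ => mul_self_nonneg _

lemma tdot {n m : ℕ} (A : Matrix (Fin m) (Fin n) ℝ) (v : Fin n → ℝ) (y : Fin m → ℝ) :
    v ⬝ᵥ (Aᵀ *ᵥ y) = (A *ᵥ v) ⬝ᵥ y := by
  rw [Matrix.dotProduct_mulVec, Matrix.vecMul_transpose]

lemma dot_amgm {k : ℕ} (u v : Fin k → ℝ) (t : ℝ) (ht : 0 < t) :
    u ⬝ᵥ v ≤ (t * (u ⬝ᵥ u) + (v ⬝ᵥ v) / t) / 2 := by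
  have h := dot_sq_nonneg' (t • u - v)
  have e : (t • u - v) ⬝ᵥ (t • u - v)
      = t^2 * (u ⬝ᵥ u) - 2 * t * (u ⬝ᵥ v) + v ⬝ᵥ v := by
    simp [sub_dotProduct, dotProduct_sub, smul_dotProduct, dotProduct_smul,
      dotProduct_comm v u, smul_eq_mul]
    ring
  rw [e] at h
  have key : u ⬝ᵥ v ≤ (t^2 * (u ⬝ᵥ u) + v ⬝ᵥ v) / (2*t) := by
    rw [le_div_iff₀ (by positivity)]; nlinarith
  have e2 : (t^2 * (u ⬝ᵥ u) + v ⬝ᵥ v) / (2*t) = (t * (u ⬝ᵥ u) + (v ⬝ᵥ v) / t) / 2 := by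
    field_simp
  linarith [key, e2.le]

lemma dot_add3 {k : ℕ} (p q r : Fin k → ℝ) :
    (p + q + r) ⬝ᵥ (p + q + r) ≤ 3 * (p ⬝ᵥ p + q ⬝ᵥ q + r ⬝ᵥ r) := by
  have e : (p + q + r) ⬝ᵥ (p + q + r)
      = p ⬝ᵥ p + q ⬝ᵥ q + r ⬝ᵥ r + 2 * (p ⬝ᵥ q) + 2 * (p ⬝ᵥ r) + 2 * (q ⬝ᵥ r) := by
    simp [dotProduct_add, add_dotProduct, dotProduct_comm q p, dotProduct_comm r p,
      dotProduct_comm r q]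
    ring
  have h1 := dot_amgm p q 1 one_pos
  have h2 := dot_amgm p r 1 one_pos
  have h3 := dot_amgm q r 1 one_pos
  simp only [one_mul, div_one] at h1 h2 h3
  linarith [e.le, e.ge]

lemma quadform_le {n m : ℕ} (A : Matrix (Fin m) (Fin n) ℝ)
    (hρ : spectralRadius ℝ (Aᵀ * A) ≤ 1) (v : Fin n → ℝ) :
    (A *ᵥ v) ⬝ᵥ (A *ᵥ v) ≤ v ⬝ᵥ v := by
  have hH : (Aᵀ * A).IsHermitian := by
    have := Matrix.isHermitian_conjTranspose_mul_self A
    rwa [Matrix.conjTranspose_eq_transpose_of_trivial] at this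
  have heig : ∀ i, hH.eigenvalues i ≤ 1 := by
    intro i
    have hmem := hH.eigenvalues_mem_spectrum_real i
    have h1 : (‖hH.eigenvalues i‖₊ : ENNReal) ≤ spectralRadius ℝ (Aᵀ * A) :=
      le_iSup₂ (f := fun k (_ : k ∈ spectrum ℝ (Aᵀ * A)) => (‖k‖₊ : ENNReal)) _ hmem
    have h2 : (‖hH.eigenvalues i‖₊ : ENNReal) ≤ 1 := h1.trans hρ
    have h3 : ‖hH.eigenvalues i‖ ≤ 1 := by
      have := ENNReal.coe_le_coe.mp (by simpa using h2)
      simpa [← NNReal.coe_le_coe] using this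
    calc hH.eigenvalues i ≤ ‖hH.eigenvalues i‖ := le_abs_self _
      _ ≤ 1 := h3
  have hS : (hH.eigenvectorUnitary : Matrix (Fin n) (Fin n) ℝ) *
      star (hH.eigenvectorUnitary : Matrix (Fin n) (Fin n) ℝ) = 1 :=
    (Matrix.mem_unitaryGroup_iff).mp hH.eigenvectorUnitary.2
  set S := (hH.eigenvectorUnitary : Matrix (Fin n) (Fin n) ℝ) with hSdef
  have hstar : star S = Sᵀ := by
    rw [Matrix.star_eq_conjTranspose, Matrix.conjTranspose_eq_transpose_of_trivial]
  set w := Sᵀ *ᵥ v with hw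
  have h0 : (A *ᵥ v) ⬝ᵥ (A *ᵥ v) = v ⬝ᵥ ((Aᵀ * A) *ᵥ v) := by
    rw [← Matrix.mulVec_mulVec, Matrix.dotProduct_mulVec v, Matrix.vecMul_transpose]
  have hHv : (Aᵀ * A) *ᵥ v = S *ᵥ (Matrix.diagonal (RCLike.ofReal ∘ hH.eigenvalues) *ᵥ w) := by
    conv_lhs => rw [hH.spectral_theorem]
    rw [Unitary.conjStarAlgAut_apply, ← hSdef]
    rw [← Matrix.mulVec_mulVec, ← Matrix.mulVec_mulVec, hstar]
  have hdot : ∀ y : Fin n → ℝ, v ⬝ᵥ (S *ᵥ y) = w ⬝ᵥ y := by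
    intro y
    rw [Matrix.dotProduct_mulVec v S, hw, Matrix.mulVec_transpose]
  have hww : w ⬝ᵥ w = v ⬝ᵥ v := by
    calc w ⬝ᵥ w = v ⬝ᵥ (S *ᵥ w) := (hdot w).symm
      _ = v ⬝ᵥ ((S * Sᵀ) *ᵥ v) := by rw [hw, Matrix.mulVec_mulVec]
      _ = v ⬝ᵥ v := by rw [← hstar, hS, Matrix.one_mulVec]
  have hfin : w ⬝ᵥ (Matrix.diagonal (RCLike.ofReal ∘ hH.eigenvalues) *ᵥ w) ≤ w ⬝ᵥ w := by
    apply Finset.sum_le_sum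
    intro i _
    rw [Matrix.mulVec_diagonal]
    have h1 := heig i
    have h2 := mul_self_nonneg (w i)
    have h3 : (RCLike.ofReal ∘ hH.eigenvalues) i = hH.eigenvalues i := by
      simp [Function.comp]
    rw [h3]
    nlinarith
  rw [h0, hHv, hdot, ← hww]
  exact hfin

lemma quadform_le_t {n m : ℕ} (A : Matrix (Fin m) (Fin n) ℝ)
    (hρ : spectralRadius ℝ (Aᵀ * A) ≤ 1) (y : Fin m → ℝ) :
    (Aᵀ *ᵥ y) ⬝ᵥ (Aᵀ *ᵥ y) ≤ y ⬝ᵥ y := by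
  set u := Aᵀ *ᵥ y with hu
  have h1 : y ⬝ᵥ (A *ᵥ u) = u ⬝ᵥ u := by
    rw [Matrix.dotProduct_mulVec y A, ← Matrix.mulVec_transpose]
  have hcs : (y ⬝ᵥ (A *ᵥ u))^2 ≤ (y ⬝ᵥ y) * ((A *ᵥ u) ⬝ᵥ (A *ᵥ u)) := by
    have := Finset.sum_mul_sq_le_sq_mul_sq Finset.univ y (A *ᵥ u)
    simpa [dotProduct, pow_two] using this
  have hAu : (A *ᵥ u) ⬝ᵥ (A *ᵥ u) ≤ u ⬝ᵥ u := quadform_le A hρ u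
  have huu : 0 ≤ u ⬝ᵥ u := dot_sq_nonneg' u
  have hyy : 0 ≤ y ⬝ᵥ y := dot_sq_nonneg' y
  rw [h1] at hcs
  nlinarith

open Classical in
lemma Iapply {k : ℕ} (S : Set (Fin k)) (v : Fin k → ℝ) (i : Fin k) :
    (ISet S *ᵥ v) i = if i ∈ S then v i else 0 := by
  rw [ISet, Matrix.mulVec_diagonal]
  split <;> simp

lemma Idot {k : ℕ} (S : Set (Fin k)) (v w : Fin k → ℝ) :
    v ⬝ᵥ (ISet S *ᵥ w) = (ISet S *ᵥ v) ⬝ᵥ w := by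
  simp only [dotProduct]
  apply Finset.sum_congr rfl
  intro i _
  rw [Iapply, Iapply]
  by_cases h : i ∈ S <;> simp [h]

lemma Iquad {k : ℕ} (S : Set (Fin k)) (v : Fin k → ℝ) :
    v ⬝ᵥ (ISet S *ᵥ v) = (ISet S *ᵥ v) ⬝ᵥ (ISet S *ᵥ v) := by
  simp only [dotProduct]
  apply Finset.sum_congr rfl
  intro i _
  rw [Iapply]
  by_cases h : i ∈ S <;> simp [h]

lemma Icontract {k : ℕ} (S : Set (Fin k)) (v : Fin k → ℝ) :
    (ISet S *ᵥ v) ⬝ᵥ (ISet S *ᵥ v) ≤ v ⬝ᵥ v := by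
  apply Finset.sum_le_sum
  intro i _
  rw [Iapply]
  by_cases h : i ∈ S <;> simp [h, mul_self_nonneg]

lemma LK_diff {n m : ℕ} (A : Matrix (Fin m) (Fin n) ℝ) (b : Fin m → ℝ) (c : Fin n → ℝ)
    (K : ℝ) (xb v : Fin n → ℝ) (zb : Fin m → ℝ) (hb : A *ᵥ xb = b)
    (h1 : ∀ i, 0 ≤ xb i) (h2 : ∀ i, 0 ≤ xb i + v i) :
    LK A b c K (xb + v) zb - LK A b c K xb zb
      = v ⬝ᵥ (c + (xb + v) + Aᵀ *ᵥ (A *ᵥ v)) - (1/2) * (v ⬝ᵥ v)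
        - (1/2) * ((A *ᵥ v) ⬝ᵥ (A *ᵥ v)) + zb ⬝ᵥ (A *ᵥ v) := by
  have hz : A *ᵥ xb - b = 0 := sub_eq_zero_of_eq hb
  have hv : A *ᵥ (xb + v) - b = A *ᵥ v := by
    rw [Matrix.mulVec_add, hb]; abel
  have hm1 : ∑ i, max 0 (-(xb i)) = 0 :=
    Finset.sum_eq_zero fun i _ => max_eq_left (neg_nonpos.mpr (h1 i))
  have hm2 : ∑ i, max 0 (-((xb + v) i)) = 0 :=
    Finset.sum_eq_zero fun i _ => max_eq_left (neg_nonpos.mpr (h2 i))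
  simp only [LK, hv, hz, hm1, hm2]
  simp only [dotProduct_add, add_dotProduct, dotProduct_zero, zero_dotProduct, tdot,
    dotProduct_comm (xb + v) v, dotProduct_comm c v, dotProduct_comm xb v]
  ring_nf
set_option maxHeartbeats 2000000
/-- Strict Lyapunov decrease for the distributed event-triggered design.
Under ρ(AᵀA) ≤ 1, the saddle-point assumptions, p̂ ⊆ p, inactivity of the distributed
triggers 𝒯_i^e with parameters 0 < μ_i ≤ 1/160 (hypotheses (b)-(c)), and the aggregated
mode-mismatch bound (d), the Lie derivative of V is at most −⅛ f̂ᵀI_{p̂}f̂. -/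
theorem distributed_lyapunov_decrease (n m : ℕ) (c : Fin n → ℝ) (b : Fin m → ℝ)
    (A : Matrix (Fin m) (Fin n) ℝ)
    (hρ : spectralRadius ℝ (Aᵀ * A) ≤ 1)
    (xh : Fin n → ℝ) (zh : Fin m → ℝ) (K : ℝ)
    (hxh : ∀ i, 0 ≤ xh i)
    (hK : ‖fmap A b c xh zh‖ ≤ K)
    (xb : Fin n → ℝ) (zb : Fin m → ℝ)
    (hsaddle : IsSaddle A b c K xb zb)
    (hAxb : A *ᵥ xb = b) (hxb : ∀ i, 0 ≤ xb i)
    (x : Fin n → ℝ) (z : Fin m → ℝ)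
    -- (a) p̂ ⊆ p
    (hsub : sgm A b c xh zh ⊆ sgm A b c x z)
    -- (b) trigger bounds on e_x
    (μ : Fin n → ℝ) (hμ : ∀ i, 0 < μ i ∧ μ i ≤ 1 / 160)
    (hbx : ∀ i, (i ∈ sgm A b c xh zh →
        (x i - xh i) ^ 2 ≤ μ i * (fmap A b c xh zh i) ^ 2) ∧
      (i ∉ sgm A b c xh zh → x i - xh i = 0))
    -- (c) trigger bounds on e_z
    (ν : Fin m → ℝ) (hν : ∀ ℓ, 0 < ν ℓ ∧ ν ℓ ≤ 1 / 160)
    (hbz : ∀ ℓ, (z ℓ - zh ℓ) ^ 2 ≤ ν ℓ * ((A *ᵥ xh - b) ℓ) ^ 2)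
    -- (d) aggregated mode-mismatch bound
    (hd : fmap A b c x z ⬝ᵥ (ISet (sgm A b c x z \ sgm A b c xh zh) *ᵥ fmap A b c x z)
      ≤ (1 / 120) *
        (fmap A b c xh zh ⬝ᵥ (ISet (sgm A b c xh zh) *ᵥ fmap A b c xh zh)
          + (A *ᵥ xh - b) ⬝ᵥ (A *ᵥ xh - b))) :
    (x - xb) ⬝ᵥ (ISet (sgm A b c xh zh) *ᵥ fmap A b c xh zh)
      + (z - zb) ⬝ᵥ (A *ᵥ xh - b)
      - fmap A b c x z ⬝ᵥ (ISet (sgm A b c x z) *ᵥ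
          ((Aᵀ * A + 1) *ᵥ (ISet (sgm A b c xh zh) *ᵥ fmap A b c xh zh)))
      - fmap A b c x z ⬝ᵥ (ISet (sgm A b c x z) *ᵥ (Aᵀ *ᵥ (A *ᵥ xh - b)))
      + (A *ᵥ x - b) ⬝ᵥ (A *ᵥ (ISet (sgm A b c xh zh) *ᵥ fmap A b c xh zh))
    ≤ -(1 / 8) * (fmap A b c xh zh ⬝ᵥ (ISet (sgm A b c xh zh) *ᵥ fmap A b c xh zh)) := by
  classical
  set Fh := fmap A b c xh zh with hFh
  set F := fmap A b c x z with hF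
  set g := A *ᵥ xh - b with hg
  set ph := sgm A b c xh zh with hph
  set p := sgm A b c x z with hp
  set u := ISet ph *ᵥ Fh with hu
  set pf := ISet p *ᵥ F with hpf
  set ex := x - xh with hex
  set ez := z - zh with hez
  set df := ISet (p \ ph) *ᵥ F with hdf
  set w := pf - u with hw
  -- basic index facts
  have hexi : ∀ i, ex i = x i - xh i := fun i => by rw [hex]; rfl
  have hezi : ∀ ℓ, ez ℓ = z ℓ - zh ℓ := fun ℓ => by rw [hez]; rfl
  have hmemh : ∀ i, i ∈ ph ↔ (0 ≤ Fh i ∨ 0 < xh i) := fun i => Iff.rfl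
  -- (2) trigger bound a2
  have ha2 : ex ⬝ᵥ ex ≤ (1/160) * (u ⬝ᵥ u) := by
    have key : ∀ i, ex i * ex i ≤ (1/160) * (u i * u i) := by
      intro i
      rw [hu]
      rw [Iapply]
      by_cases hi : i ∈ ph
      · rw [if_pos hi]
        have h1 := (hbx i).1 hi
        have h2 := hμ i
        have hsq : (x i - xh i)^2 ≤ (1/160) * Fh i ^ 2 :=
          le_trans h1 (by nlinarith [sq_nonneg (Fh i), h2.1, h2.2])
        calc ex i * ex i = (x i - xh i)^2 := by rw [hexi]; ring
          _ ≤ (1/160) * Fh i^2 := hsq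
          _ = (1/160) * (Fh i * Fh i) := by ring
      · rw [if_neg hi]
        have h0 := (hbx i).2 hi
        have : ex i = 0 := by rw [hexi]; exact h0
        simp [this]
    calc ex ⬝ᵥ ex = ∑ i, ex i * ex i := rfl
      _ ≤ ∑ i, (1/160) * (u i * u i) := Finset.sum_le_sum fun i _ => key i
      _ = (1/160) * (u ⬝ᵥ u) := by rw [← Finset.mul_sum]; rfl
  -- (3) trigger bound e2
  have he2 : ez ⬝ᵥ ez ≤ (1/160) * (g ⬝ᵥ g) := by
    have key : ∀ ℓ, ez ℓ * ez ℓ ≤ (1/160) * (g ℓ * g ℓ) := by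
      intro ℓ
      have h1 := hbz ℓ
      have h2 := hν ℓ
      have : (z ℓ - zh ℓ)^2 ≤ (1/160) * g ℓ ^ 2 :=
        le_trans h1 (by nlinarith [sq_nonneg (g ℓ), h2.1, h2.2])
      calc ez ℓ * ez ℓ = (z ℓ - zh ℓ)^2 := by rw [hezi]; ring
        _ ≤ (1/160) * g ℓ^2 := this
        _ = (1/160) * (g ℓ * g ℓ) := by ring
    calc ez ⬝ᵥ ez = ∑ ℓ, ez ℓ * ez ℓ := rfl
      _ ≤ ∑ ℓ, (1/160) * (g ℓ * g ℓ) := Finset.sum_le_sum fun ℓ _ => key ℓ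
      _ = (1/160) * (g ⬝ᵥ g) := by rw [← Finset.mul_sum]; rfl
  -- (4) mode mismatch
  have eA2 : Fh ⬝ᵥ u = u ⬝ᵥ u := by rw [hu]; exact Iquad _ _
  have eD2 : F ⬝ᵥ df = df ⬝ᵥ df := by rw [hdf]; exact Iquad _ _
  have hd2 : df ⬝ᵥ df ≤ (1/120) * (u ⬝ᵥ u + g ⬝ᵥ g) := by linarith [hd, eD2, eA2]
  -- (5) key linear identity
  have hkey : Fh - F = Aᵀ *ᵥ (A *ᵥ ex) + ex + Aᵀ *ᵥ ez := by
    rw [hFh, hF, hex, hez]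
    simp only [fmap, Matrix.mulVec_sub, Matrix.mulVec_add]
    abel
  -- (6) decomposition of w
  set q1 := ISet ph *ᵥ (Aᵀ *ᵥ (A *ᵥ ex)) with hq1
  set q2 := ISet ph *ᵥ ex with hq2
  set q3 := ISet ph *ᵥ (Aᵀ *ᵥ ez) with hq3
  have hwf : w = df - q1 - q2 - q3 := by
    have step1 : w = df + ISet ph *ᵥ (F - Fh) := by
      rw [hw, hpf, hu, hdf]
      funext i
      simp only [Pi.sub_apply, Pi.add_apply, Iapply]
      by_cases hi : i ∈ ph
      · have hip : i ∈ p := hsub hi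
        have hnd : i ∉ p \ ph := fun h => h.2 hi
        simp [hi, hip, hnd]
      · by_cases hip : i ∈ p
        · have hd' : i ∈ p \ ph := ⟨hip, hi⟩
          simp [hi, hip, hd']
        · have hnd : i ∉ p \ ph := fun h => hip h.1
          simp [hi, hip, hnd]
    have hFFh : F - Fh = -(Aᵀ *ᵥ (A *ᵥ ex) + ex + Aᵀ *ᵥ ez) := by rw [← hkey]; abel
    have step2 : ISet ph *ᵥ (F - Fh) = -q1 - q2 - q3 := by
      rw [hFFh, hq1, hq2, hq3]
      simp only [Matrix.mulVec_neg, Matrix.mulVec_add]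
      abel
    rw [step1, step2]; abel
  -- (7) bound on w
  have hW2 : w ⬝ᵥ w ≤ 3 * (df ⬝ᵥ df + (q1+q2) ⬝ᵥ (q1+q2) + q3 ⬝ᵥ q3) := by
    have h := dot_add3 df (-(q1+q2)) (-q3)
    have he : df + -(q1+q2) + -q3 = w := by rw [hwf]; abel
    rw [he] at h
    simp only [neg_dotProduct, dotProduct_neg, neg_neg] at h
    exact h
  have hq12 : (q1+q2) ⬝ᵥ (q1+q2) ≤ 4 * (ex ⬝ᵥ ex) := by
    have e : (q1+q2) ⬝ᵥ (q1+q2) = q1 ⬝ᵥ q1 + 2*(q1 ⬝ᵥ q2) + q2 ⬝ᵥ q2 := by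
      simp only [dotProduct_add, add_dotProduct, dotProduct_comm q2 q1]
      ring
    have hq1b : q1 ⬝ᵥ q1 ≤ ex ⬝ᵥ ex := by
      calc q1 ⬝ᵥ q1 ≤ (Aᵀ *ᵥ (A *ᵥ ex)) ⬝ᵥ (Aᵀ *ᵥ (A *ᵥ ex)) := by rw [hq1]; exact Icontract _ _
        _ ≤ (A *ᵥ ex) ⬝ᵥ (A *ᵥ ex) := quadform_le_t A hρ _
        _ ≤ ex ⬝ᵥ ex := quadform_le A hρ _
    have hq2b : q2 ⬝ᵥ q2 ≤ ex ⬝ᵥ ex := by rw [hq2]; exact Icontract _ _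
    have hcross := dot_amgm q1 q2 1 one_pos
    simp only [one_mul, div_one] at hcross
    linarith [e.le, e.ge]
  have hq3b : q3 ⬝ᵥ q3 ≤ ez ⬝ᵥ ez := by
    calc q3 ⬝ᵥ q3 ≤ (Aᵀ *ᵥ ez) ⬝ᵥ (Aᵀ *ᵥ ez) := by rw [hq3]; exact Icontract _ _
      _ ≤ ez ⬝ᵥ ez := quadform_le_t A hρ _
  -- (8) saddle point bound
  set v0 := xh - xb with hv0
  have hx0 : xb + v0 = xh := by rw [hv0]; abel
  have hnn : ∀ i, 0 ≤ xb i + v0 i := by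
    intro i
    have h := congrFun hx0 i
    simp only [Pi.add_apply] at h
    rw [h]; exact hxh i
  have hdiff := LK_diff A b c K xb v0 zb hAxb hxb hnn
  rw [hx0] at hdiff
  have hAv0 : A *ᵥ v0 = g := by rw [hv0, hg, Matrix.mulVec_sub, hAxb]
  rw [hAv0] at hdiff
  have hsad := (hsaddle xh zb).2
  have hineq0 : 0 ≤ v0 ⬝ᵥ (c + xh + Aᵀ *ᵥ g) - (1/2)*(v0 ⬝ᵥ v0)
      - (1/2)*(g ⬝ᵥ g) + zb ⬝ᵥ g := by rw [← hdiff]; linarith [hsad]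
  have hFh2 : Fh = -(c + xh + Aᵀ *ᵥ g) - Aᵀ *ᵥ zh := by
    rw [hFh, hg]; simp only [fmap]; abel
  have hsign : 0 ≤ v0 ⬝ᵥ (Fh - u) := by
    apply Finset.sum_nonneg
    intro i _
    rw [hu]
    by_cases hi : i ∈ ph
    · simp [Iapply, hi]
    · have hnot : ¬ (0 ≤ Fh i ∨ 0 < xh i) := fun h => hi ((hmemh i).mpr h)
      push_neg at hnot
      have hx0' : xh i = 0 := le_antisymm hnot.2 (hxh i)
      have hv0i : v0 i = -xb i := by rw [hv0]; simp [hx0']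
      have hFhi : Fh i < 0 := hnot.1
      simp only [Pi.sub_apply, Iapply, if_neg hi]
      rw [hv0i]
      have := hxb i
      nlinarith
  have hvu : v0 ⬝ᵥ u ≤ v0 ⬝ᵥ Fh := by
    have hsub' : v0 ⬝ᵥ (Fh - u) = v0 ⬝ᵥ Fh - v0 ⬝ᵥ u := dotProduct_sub _ _ _
    linarith
  have hvFh : v0 ⬝ᵥ Fh = -(v0 ⬝ᵥ (c + xh + Aᵀ *ᵥ g)) - g ⬝ᵥ zh := by
    rw [hFh2, dotProduct_sub, dotProduct_neg, tdot, hAv0, dotProduct_comm g zh]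
  have hS0 : v0 ⬝ᵥ u + (zh - zb) ⬝ᵥ g ≤ -(1/2) * (g ⬝ᵥ g) := by
    have hcomm : g ⬝ᵥ zh = zh ⬝ᵥ g := dotProduct_comm _ _
    have hsubd : (zh - zb) ⬝ᵥ g = zh ⬝ᵥ g - zb ⬝ᵥ g := sub_dotProduct _ _ _
    linarith [dot_sq_nonneg' v0]
  -- (9) goal-side identities
  have hsplit : (Aᵀ * A + 1) *ᵥ u = Aᵀ *ᵥ (A *ᵥ u) + u := by
    rw [Matrix.add_mulVec, Matrix.one_mulVec, ← Matrix.mulVec_mulVec]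
  have hpfu : pf = u + w := by rw [hw]; abel
  have e3 : F ⬝ᵥ (ISet p *ᵥ ((Aᵀ * A + 1) *ᵥ u))
      = (A *ᵥ u) ⬝ᵥ (A *ᵥ u) + (A *ᵥ w) ⬝ᵥ (A *ᵥ u) + (u ⬝ᵥ u + w ⬝ᵥ u) := by
    rw [hsplit, Idot, ← hpf, dotProduct_add, tdot, hpfu, Matrix.mulVec_add,
      add_dotProduct, add_dotProduct]
  have e4 : F ⬝ᵥ (ISet p *ᵥ (Aᵀ *ᵥ g)) = (A *ᵥ u) ⬝ᵥ g + (A *ᵥ w) ⬝ᵥ g := by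
    rw [Idot, ← hpf, tdot, hpfu, Matrix.mulVec_add, add_dotProduct]
  have e5 : (A *ᵥ x - b) ⬝ᵥ (A *ᵥ u) = g ⬝ᵥ (A *ᵥ u) + (A *ᵥ ex) ⬝ᵥ (A *ᵥ u) := by
    have hxe : A *ᵥ x - b = g + A *ᵥ ex := by rw [hg, hex, Matrix.mulVec_sub]; abel
    rw [hxe, add_dotProduct]
  have e1 : (x - xb) ⬝ᵥ u = v0 ⬝ᵥ u + ex ⬝ᵥ u := by
    have hxe : x - xb = v0 + ex := by rw [hv0, hex]; abel
    rw [hxe, add_dotProduct]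
  have e2 : (z - zb) ⬝ᵥ g = (zh - zb) ⬝ᵥ g + ez ⬝ᵥ g := by
    have hze : z - zb = (zh - zb) + ez := by rw [hez]; abel
    rw [hze, add_dotProduct]
  -- (10) cross bounds
  have hc1 := dot_amgm ex u 13 (by norm_num)
  have hc2 := dot_amgm ez g 13 (by norm_num)
  have hc3 := dot_amgm (-(A *ᵥ w)) (A *ᵥ u) 1 one_pos
  have hc4 := dot_amgm (-w) u (19/6) (by norm_num)
  have hc5 := dot_amgm (-(A *ᵥ w)) g (5/2) (by norm_num)
  have hc6 := dot_amgm (A *ᵥ ex) (A *ᵥ u) 1 one_pos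
  simp only [neg_dotProduct, dotProduct_neg, neg_neg] at hc3 hc4 hc5
  have hAw : (A *ᵥ w) ⬝ᵥ (A *ᵥ w) ≤ w ⬝ᵥ w := quadform_le A hρ w
  have hAex : (A *ᵥ ex) ⬝ᵥ (A *ᵥ ex) ≤ ex ⬝ᵥ ex := quadform_le A hρ ex
  have hAu : (A *ᵥ u) ⬝ᵥ (A *ᵥ u) ≤ u ⬝ᵥ u := quadform_le A hρ u
  have hgAu : g ⬝ᵥ (A *ᵥ u) = (A *ᵥ u) ⬝ᵥ g := dotProduct_comm _ _
  -- final assembly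
  rw [e1, e2, e3, e4, e5, eA2]
  linarith [ha2, he2, hd2, hW2, hq12, hq3b, hS0, hc1, hc2, hc3, hc4, hc5, hc6,
    hAw, hAex, hAu, hgAu, dot_sq_nonneg' w, dot_sq_nonneg' g, dot_sq_nonneg' u,
    dot_sq_nonneg' ex, dot_sq_nonneg' ez, dot_sq_nonneg' df,
    dot_sq_nonneg' (A *ᵥ u), dot_sq_nonneg' (A *ᵥ w)]
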